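/- Let 0 < r < ∞ and let κ_r be the unique number in (0,∞) with lim_{k→∞} (1/k) log Σ_{σ∈Ω_k} (μ_h(J_σ) ‖φ'_σ‖^r)^{κ_r/(r+κ_r)} = 0. Then, with L := η^3 ξ^{3h}, for every n ≥ 1 one has (Lξ^r)^{-κ_r/(r+κ_r)} ≤ Σ_{σ∈Ω_n} (μ_h(J_σ) ‖φ'_σ‖^r)^{κ_r/(r+κ_r)} ≤ (Lξ^r)^{κ_r/(r+κ_r)}. -/

import Mathlib

open MeasureTheory Filter Metric

noncomputable section

/-- A cookie-cutter system on `J = [0,1]`. -/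
structure CookieCutter where
  N : ℕ
  hN : 2 ≤ N
  Jsub : Fin N → Set ℝ
  f : ℝ → ℝ
  φ : Fin N → ℝ → ℝ
  c : ℝ
  γ : ℝ
  b : ℝ
  B : ℝ
  hJsub_sub : ∀ j, Jsub j ⊆ Set.Icc 0 1
  hJsub_interval : ∀ j, ∃ u v : ℝ, u ≤ v ∧ Jsub j = Set.Icc u v
  hJsub_disj : ∀ i j, i ≠ j → Disjoint (Jsub i) (Jsub j)
  hbij : ∀ j, Set.BijOn f (Jsub j) (Set.Icc 0 1)
  hφ_maps : ∀ j, ∀ x ∈ Set.Icc (0:ℝ) 1, φ j x ∈ Jsub j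
  hφ_rinv : ∀ j, ∀ x ∈ Set.Icc (0:ℝ) 1, f (φ j x) = x
  hφ_linv : ∀ j, ∀ x ∈ Jsub j, φ j (f x) = x
  hfdiff : ∀ j, ∀ x ∈ Jsub j, DifferentiableAt ℝ f x
  hφdiff : ∀ j, ∀ x ∈ Set.Icc (0:ℝ) 1, DifferentiableAt ℝ (φ j) x
  hc : 0 < c
  hγ : γ ∈ Set.Ioc (0:ℝ) 1
  hHolder : ∀ j, ∀ x ∈ Jsub j, ∀ y ∈ Jsub j, |deriv f x - deriv f y| ≤ c * |x - y| ^ γ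
  hb : IsGLB ((fun x => |deriv f x|) '' ⋃ j, Jsub j) b
  hB : IsLUB ((fun x => |deriv f x|) '' ⋃ j, Jsub j) B
  hb1 : 1 < b

namespace CookieCutter

variable (cc : CookieCutter)

/-- `φ_σ = φ_{σ_1} ∘ ⋯ ∘ φ_{σ_n}` for a word `σ`. -/
def wordMap : List (Fin cc.N) → ℝ → ℝ
  | [] => id
  | j :: rest => cc.φ j ∘ wordMap rest

/-- The basic interval `J_σ = φ_σ(J)`. -/
def Jc (σ : List (Fin cc.N)) : Set ℝ := cc.wordMap σ '' Set.Icc 0 1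

/-- The diameter `|J_σ|`. -/
def diamJ (σ : List (Fin cc.N)) : ℝ := Metric.diam (cc.Jc σ)

/-- `‖φ'_σ‖ = sup_{x ∈ J} |φ'_σ(x)|`. -/
def φnorm (σ : List (Fin cc.N)) : ℝ :=
  sSup ((fun x => |deriv (cc.wordMap σ) x|) '' Set.Icc 0 1)

/-- The distortion constant `ξ = exp (c / (b^γ − 1))`. -/
def xi : ℝ := Real.exp (cc.c / (cc.b ^ cc.γ - 1))

/-- The cookie-cutter set `E = ⋂_{n ≥ 1} ⋃_{σ ∈ Ω_n} J_σ`. -/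
def E : Set ℝ := ⋂ (n : ℕ) (_ : 1 ≤ n), ⋃ σ : Fin n → Fin cc.N, cc.Jc (List.ofFn σ)

/-- `η = ξ^{9h}`. -/
def eta (h : ℝ) : ℝ := cc.xi ^ ((9:ℝ) * h)

/-- `L = η³ ξ^{3h}`. -/
def Lconst (h : ℝ) : ℝ := (cc.eta h) ^ 3 * cc.xi ^ ((3:ℝ) * h)

/-- A Gibbs-like measure for the cookie-cutter system: a Borel probability measure
supported on `E` with `η⁻¹|J_σ|^h ≤ μ(J_σ) ≤ η|J_σ|^h` for every word `σ`. -/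
def IsGibbsLike (μ : Measure ℝ) (h : ℝ) : Prop :=
  IsProbabilityMeasure μ ∧ μ (cc.Eᶜ) = 0 ∧
    ∀ σ : List (Fin cc.N), σ ≠ [] →
      (cc.eta h)⁻¹ * cc.diamJ σ ^ h ≤ (μ (cc.Jc σ)).toReal ∧
      (μ (cc.Jc σ)).toReal ≤ cc.eta h * cc.diamJ σ ^ h

/-- A finite maximal antichain in `Ω`. -/
def IsFMA (Γ : Finset (List (Fin cc.N))) : Prop :=
  (∀ σ ∈ Γ, σ ≠ []) ∧
  (∀ ω : ℕ → Fin cc.N, ∃ k : ℕ, 1 ≤ k ∧ (List.ofFn fun i : Fin k => ω i) ∈ Γ) ∧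
  ∀ σ ∈ Γ, ∀ τ ∈ Γ, σ <+: τ → σ = τ

end CookieCutter
namespace CookieCutter

variable (cc : CookieCutter)

lemma hb0 : (0:ℝ) < cc.b := lt_trans zero_lt_one cc.hb1

lemma Jsub_nonempty (j : Fin cc.N) : (cc.Jsub j).Nonempty := by
  obtain ⟨u, v, huv, hj⟩ := cc.hJsub_interval j
  exact hj ▸ Set.nonempty_Icc.2 huv

lemma f'_lb (j : Fin cc.N) {y : ℝ} (hy : y ∈ cc.Jsub j) : cc.b ≤ |deriv cc.f y| :=
  cc.hb.1 ⟨y, Set.mem_iUnion.2 ⟨j, hy⟩, rfl⟩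

lemma f'_ub (j : Fin cc.N) {y : ℝ} (hy : y ∈ cc.Jsub j) : |deriv cc.f y| ≤ cc.B :=
  cc.hB.1 ⟨y, Set.mem_iUnion.2 ⟨j, hy⟩, rfl⟩

lemma hB1 : 1 < cc.B := by
  obtain ⟨y, hy⟩ := cc.Jsub_nonempty ⟨0, lt_of_lt_of_le two_pos cc.hN⟩
  exact lt_of_lt_of_le cc.hb1 (le_trans (cc.f'_lb _ hy) (cc.f'_ub _ hy))

lemma hB0 : (0:ℝ) < cc.B := lt_trans zero_lt_one cc.hB1

lemma f'_ne (j : Fin cc.N) {y : ℝ} (hy : y ∈ cc.Jsub j) : deriv cc.f y ≠ 0 := by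
  intro h
  have := cc.f'_lb j hy
  rw [h, abs_zero] at this
  exact absurd (lt_of_lt_of_le cc.hb0 this) (lt_irrefl 0)

lemma phi_deriv (j : Fin cc.N) {x : ℝ} (hx : x ∈ Set.Icc (0:ℝ) 1) :
    deriv (cc.φ j) x = (deriv cc.f (cc.φ j x))⁻¹ := by
  have hφx : cc.φ j x ∈ cc.Jsub j := cc.hφ_maps j x hx
  have h1 : HasDerivAt (cc.φ j) (deriv (cc.φ j) x) x := (cc.hφdiff j x hx).hasDerivAt
  have h2 : HasDerivAt cc.f (deriv cc.f (cc.φ j x)) (cc.φ j x) :=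
    (cc.hfdiff j _ hφx).hasDerivAt
  have hcomp : HasDerivWithinAt (cc.f ∘ cc.φ j)
      (deriv cc.f (cc.φ j x) * deriv (cc.φ j) x) (Set.Icc 0 1) x :=
    (h2.comp x h1).hasDerivWithinAt
  have hid : HasDerivWithinAt (cc.f ∘ cc.φ j) 1 (Set.Icc 0 1) x := by
    have : HasDerivWithinAt (fun y : ℝ => y) 1 (Set.Icc 0 1) x := (hasDerivAt_id x).hasDerivWithinAt
    exact this.congr (fun y hy => cc.hφ_rinv j y hy) (cc.hφ_rinv j x hx)
  have hud : UniqueDiffWithinAt ℝ (Set.Icc (0:ℝ) 1) x := (uniqueDiffOn_Icc zero_lt_one) x hx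
  have huniq : deriv cc.f (cc.φ j x) * deriv (cc.φ j) x = 1 :=
    hud.eq_deriv _ hcomp hid
  have hne : deriv cc.f (cc.φ j x) ≠ 0 := cc.f'_ne j hφx
  field_simp
  linarith [huniq]
lemma phi_deriv_abs_le (j : Fin cc.N) {x : ℝ} (hx : x ∈ Set.Icc (0:ℝ) 1) :
    |deriv (cc.φ j) x| ≤ cc.b⁻¹ := by
  rw [cc.phi_deriv j hx, abs_inv]
  exact inv_anti₀ cc.hb0 (cc.f'_lb j (cc.hφ_maps j x hx))

lemma phi_deriv_abs_ge (j : Fin cc.N) {x : ℝ} (hx : x ∈ Set.Icc (0:ℝ) 1) :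
    cc.B⁻¹ ≤ |deriv (cc.φ j) x| := by
  rw [cc.phi_deriv j hx, abs_inv]
  exact inv_anti₀ (abs_pos.2 (cc.f'_ne j (cc.hφ_maps j x hx)))
    (cc.f'_ub j (cc.hφ_maps j x hx))

lemma word_base (σ : List (Fin cc.N)) : ∀ x ∈ Set.Icc (0:ℝ) 1,
    cc.wordMap σ x ∈ Set.Icc (0:ℝ) 1 ∧
    HasDerivAt (cc.wordMap σ) (deriv (cc.wordMap σ) x) x ∧
    cc.B⁻¹ ^ σ.length ≤ |deriv (cc.wordMap σ) x| ∧
    |deriv (cc.wordMap σ) x| ≤ cc.b⁻¹ ^ σ.length := by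
  induction σ with
  | nil =>
    intro x hx
    refine ⟨hx, ?_, ?_, ?_⟩ <;> simp [wordMap, deriv_id]
    exact (hasDerivAt_id x)
  | cons j σ ih =>
    intro x hx
    obtain ⟨hmem, hder, hlb, hub⟩ := ih x hx
    have hWx : cc.wordMap σ x ∈ Set.Icc (0:ℝ) 1 := hmem
    have hφd : HasDerivAt (cc.φ j) (deriv (cc.φ j) (cc.wordMap σ x)) (cc.wordMap σ x) :=
      (cc.hφdiff j _ hWx).hasDerivAt
    have hcomp : HasDerivAt (cc.wordMap (j :: σ))
        (deriv (cc.φ j) (cc.wordMap σ x) * deriv (cc.wordMap σ) x) x := by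
      have := hφd.comp x hder
      exact this
    have hdval : deriv (cc.wordMap (j :: σ)) x
        = deriv (cc.φ j) (cc.wordMap σ x) * deriv (cc.wordMap σ) x := hcomp.deriv
    refine ⟨cc.hJsub_sub j (cc.hφ_maps j _ hWx), hdval ▸ hcomp, ?_, ?_⟩
    · rw [hdval, abs_mul, List.length_cons, pow_succ']
      exact mul_le_mul (cc.phi_deriv_abs_ge j hWx) hlb (pow_nonneg (inv_nonneg.2 cc.hB0.le) _)
        (abs_nonneg _)
    · rw [hdval, abs_mul, List.length_cons, pow_succ']
      exact mul_le_mul (cc.phi_deriv_abs_le j hWx) hub (abs_nonneg _)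
        (inv_nonneg.2 cc.hb0.le)

lemma word_mem (σ : List (Fin cc.N)) {x : ℝ} (hx : x ∈ Set.Icc (0:ℝ) 1) :
    cc.wordMap σ x ∈ Set.Icc (0:ℝ) 1 := (cc.word_base σ x hx).1

lemma word_hasDerivAt (σ : List (Fin cc.N)) {x : ℝ} (hx : x ∈ Set.Icc (0:ℝ) 1) :
    HasDerivAt (cc.wordMap σ) (deriv (cc.wordMap σ) x) x := (cc.word_base σ x hx).2.1

lemma word_deriv_pos (σ : List (Fin cc.N)) {x : ℝ} (hx : x ∈ Set.Icc (0:ℝ) 1) :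
    0 < |deriv (cc.wordMap σ) x| :=
  lt_of_lt_of_le (pow_pos (inv_pos.2 cc.hB0) _) (cc.word_base σ x hx).2.2.1

lemma word_lip (σ : List (Fin cc.N)) {C : ℝ}
    (hC : ∀ x ∈ Set.Icc (0:ℝ) 1, |deriv (cc.wordMap σ) x| ≤ C)
    {x y : ℝ} (hx : x ∈ Set.Icc (0:ℝ) 1) (hy : y ∈ Set.Icc (0:ℝ) 1) :
    |cc.wordMap σ x - cc.wordMap σ y| ≤ C * |x - y| := by
  have := (convex_Icc (0:ℝ) 1).norm_image_sub_le_of_norm_hasDerivWithin_le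
    (f := cc.wordMap σ) (f' := deriv (cc.wordMap σ)) (C := C)
    (fun z hz => (cc.word_hasDerivAt σ hz).hasDerivWithinAt)
    (fun z hz => by rw [Real.norm_eq_abs]; exact hC z hz) hy hx
  simpa [Real.norm_eq_abs] using this

lemma word_contract (σ : List (Fin cc.N)) {x y : ℝ}
    (hx : x ∈ Set.Icc (0:ℝ) 1) (hy : y ∈ Set.Icc (0:ℝ) 1) :
    |cc.wordMap σ x - cc.wordMap σ y| ≤ cc.b⁻¹ ^ σ.length * |x - y| :=
  cc.word_lip σ (fun z hz => (cc.word_base σ z hz).2.2.2) hx hy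
lemma word_cons_deriv (j : Fin cc.N) (σ : List (Fin cc.N)) {x : ℝ}
    (hx : x ∈ Set.Icc (0:ℝ) 1) :
    deriv (cc.wordMap (j :: σ)) x
      = deriv (cc.φ j) (cc.wordMap σ x) * deriv (cc.wordMap σ) x := by
  have hWx := cc.word_mem σ hx
  have hφd : HasDerivAt (cc.φ j) (deriv (cc.φ j) (cc.wordMap σ x)) (cc.wordMap σ x) :=
    (cc.hφdiff j _ hWx).hasDerivAt
  exact (hφd.comp x (cc.word_hasDerivAt σ hx)).deriv

lemma t_pos : 0 < cc.b ^ (-cc.γ) := Real.rpow_pos_of_pos cc.hb0 _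

lemma t_lt_one : cc.b ^ (-cc.γ) < 1 :=
  Real.rpow_lt_one_of_one_lt_of_neg cc.hb1 (neg_neg_iff_pos.2 cc.hγ.1)

lemma pow_rpow_eq (m : ℕ) : ((cc.b⁻¹ ^ m : ℝ)) ^ cc.γ = (cc.b ^ (-cc.γ)) ^ m := by
  have hb := cc.hb0
  rw [← Real.rpow_natCast cc.b⁻¹ m, ← Real.rpow_natCast (cc.b ^ (-cc.γ)) m,
    ← Real.rpow_neg_one cc.b, ← Real.rpow_mul hb.le, ← Real.rpow_mul hb.le,
    ← Real.rpow_mul hb.le]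
  congr 1
  ring

lemma word_ratio (σ : List (Fin cc.N)) : ∀ x ∈ Set.Icc (0:ℝ) 1, ∀ y ∈ Set.Icc (0:ℝ) 1,
    |deriv (cc.wordMap σ) x| ≤
      Real.exp (cc.c / cc.b * ∑ k ∈ Finset.range σ.length, (cc.b ^ (-cc.γ)) ^ (k+1)) *
        |deriv (cc.wordMap σ) y| := by
  induction σ with
  | nil =>
    intro x hx y hy
    simp [wordMap, deriv_id]
  | cons j σ ih =>
    intro x hx y hy
    set t := cc.b ^ (-cc.γ) with ht
    set n := σ.length with hn
    have hb := cc.hb0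
    have hc := cc.hc
    have hWx := cc.word_mem σ hx
    have hWy := cc.word_mem σ hy
    have hpx : cc.wordMap (j :: σ) x ∈ cc.Jsub j := cc.hφ_maps j _ hWx
    have hpy : cc.wordMap (j :: σ) y ∈ cc.Jsub j := cc.hφ_maps j _ hWy
    have hxy1 : |x - y| ≤ 1 := by
      rw [abs_sub_le_iff]; constructor <;> linarith [hx.1, hx.2, hy.1, hy.2]
    have hdist : |cc.wordMap (j :: σ) x - cc.wordMap (j :: σ) y| ≤ cc.b⁻¹ ^ (n+1) := by
      have := cc.word_contract (j :: σ) hx hy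
      rw [List.length_cons] at this
      calc |cc.wordMap (j :: σ) x - cc.wordMap (j :: σ) y|
          ≤ cc.b⁻¹ ^ (n+1) * |x - y| := this
        _ ≤ cc.b⁻¹ ^ (n+1) * 1 := by
            exact mul_le_mul_of_nonneg_left hxy1 (pow_nonneg (inv_nonneg.2 hb.le) _)
        _ = cc.b⁻¹ ^ (n+1) := mul_one _
    have hHol : |deriv cc.f (cc.wordMap (j::σ) x) - deriv cc.f (cc.wordMap (j::σ) y)|
        ≤ cc.c * t ^ (n+1) := by
      calc |deriv cc.f (cc.wordMap (j::σ) x) - deriv cc.f (cc.wordMap (j::σ) y)|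
          ≤ cc.c * |cc.wordMap (j::σ) x - cc.wordMap (j::σ) y| ^ cc.γ :=
            cc.hHolder j _ hpx _ hpy
        _ ≤ cc.c * (cc.b⁻¹ ^ (n+1)) ^ cc.γ := by
            refine mul_le_mul_of_nonneg_left ?_ hc.le
            exact Real.rpow_le_rpow (abs_nonneg _) hdist cc.hγ.1.le
        _ = cc.c * t ^ (n+1) := by rw [cc.pow_rpow_eq]
    -- |f' py| ≤ exp((c/b) t^(n+1)) * |f' px|
    have hfx : cc.b ≤ |deriv cc.f (cc.wordMap (j::σ) x)| := cc.f'_lb j hpx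
    have hfy : cc.b ≤ |deriv cc.f (cc.wordMap (j::σ) y)| := cc.f'_lb j hpy
    have htp : 0 < t ^ (n+1) := pow_pos cc.t_pos _
    have hkey : |deriv cc.f (cc.wordMap (j::σ) y)|
        ≤ Real.exp (cc.c / cc.b * t ^ (n+1)) * |deriv cc.f (cc.wordMap (j::σ) x)| := by
      have h1 : |deriv cc.f (cc.wordMap (j::σ) y)|
          ≤ |deriv cc.f (cc.wordMap (j::σ) x)| + cc.c * t ^ (n+1) := by
        have := abs_sub_abs_le_abs_sub (deriv cc.f (cc.wordMap (j::σ) y))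
          (deriv cc.f (cc.wordMap (j::σ) x))
        have h2 : |deriv cc.f (cc.wordMap (j::σ) y) - deriv cc.f (cc.wordMap (j::σ) x)|
            ≤ cc.c * t ^ (n+1) := by rwa [abs_sub_comm] at hHol
        linarith
      have h3 : cc.c * t ^ (n+1)
          ≤ |deriv cc.f (cc.wordMap (j::σ) x)| * (cc.c / cc.b * t ^ (n+1)) := by
        rw [show |deriv cc.f (cc.wordMap (j::σ) x)| * (cc.c / cc.b * t ^ (n+1))
            = (|deriv cc.f (cc.wordMap (j::σ) x)| / cc.b) * (cc.c * t ^ (n+1)) by ring]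
        have h5 : (1:ℝ) ≤ |deriv cc.f (cc.wordMap (j::σ) x)| / cc.b := (one_le_div hb).2 hfx
        nlinarith [mul_pos hc htp]
      calc |deriv cc.f (cc.wordMap (j::σ) y)|
          ≤ |deriv cc.f (cc.wordMap (j::σ) x)| * (1 + cc.c / cc.b * t ^ (n+1)) := by
            rw [mul_add, mul_one]; linarith
        _ ≤ |deriv cc.f (cc.wordMap (j::σ) x)| * Real.exp (cc.c / cc.b * t ^ (n+1)) := by
            refine mul_le_mul_of_nonneg_left ?_ (abs_nonneg _)
            have := Real.add_one_le_exp (cc.c / cc.b * t ^ (n+1))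
            linarith
        _ = Real.exp (cc.c / cc.b * t ^ (n+1)) * |deriv cc.f (cc.wordMap (j::σ) x)| :=
            mul_comm _ _
    -- conclude
    have hdx := cc.word_cons_deriv j σ hx
    have hdy := cc.word_cons_deriv j σ hy
    have hφx : |deriv (cc.φ j) (cc.wordMap σ x)| = |deriv cc.f (cc.wordMap (j::σ) x)|⁻¹ := by
      rw [cc.phi_deriv j hWx, abs_inv]; rfl
    have hφy : |deriv (cc.φ j) (cc.wordMap σ y)| = |deriv cc.f (cc.wordMap (j::σ) y)|⁻¹ := by
      rw [cc.phi_deriv j hWy, abs_inv]; rfl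
    have hfx0 : (0:ℝ) < |deriv cc.f (cc.wordMap (j::σ) x)| := lt_of_lt_of_le hb hfx
    have hfy0 : (0:ℝ) < |deriv cc.f (cc.wordMap (j::σ) y)| := lt_of_lt_of_le hb hfy
    have hinv : |deriv cc.f (cc.wordMap (j::σ) x)|⁻¹
        ≤ Real.exp (cc.c / cc.b * t ^ (n+1)) * |deriv cc.f (cc.wordMap (j::σ) y)|⁻¹ := by
      rw [← div_eq_mul_inv, le_div_iff₀ hfy0, inv_mul_eq_div, div_le_iff₀ hfx0]
      linarith [hkey]
    have ihxy := ih x hx y hy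
    rw [hdx, hdy, abs_mul, abs_mul, hφx, hφy, List.length_cons,
      Finset.sum_range_succ, mul_add, Real.exp_add]
    calc |deriv cc.f (cc.wordMap (j::σ) x)|⁻¹ * |deriv (cc.wordMap σ) x|
        ≤ (Real.exp (cc.c / cc.b * t ^ (n+1)) * |deriv cc.f (cc.wordMap (j::σ) y)|⁻¹) *
          (Real.exp (cc.c / cc.b * ∑ k ∈ Finset.range n, t ^ (k+1)) *
            |deriv (cc.wordMap σ) y|) := by
          exact mul_le_mul hinv ihxy (abs_nonneg _)
            (by positivity)
      _ = Real.exp (cc.c / cc.b * ∑ k ∈ Finset.range n, t ^ (k+1)) *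
            Real.exp (cc.c / cc.b * t ^ (n+1)) *
            (|deriv cc.f (cc.wordMap (j::σ) y)|⁻¹ * |deriv (cc.wordMap σ) y|) := by ring
lemma xi_pos : 0 < cc.xi := Real.exp_pos _

lemma bγ_gt_one : 1 < cc.b ^ cc.γ :=
  Real.one_lt_rpow_iff_of_pos cc.hb0 |>.2 (Or.inl ⟨cc.hb1, cc.hγ.1⟩)

lemma one_le_xi : 1 ≤ cc.xi := by
  have h := cc.bγ_gt_one
  have : (0:ℝ) ≤ cc.c / (cc.b ^ cc.γ - 1) := div_nonneg cc.hc.le (by linarith)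
  calc (1:ℝ) = Real.exp 0 := Real.exp_zero.symm
    _ ≤ cc.xi := Real.exp_le_exp.2 this

lemma word_distortion (σ : List (Fin cc.N)) {x y : ℝ}
    (hx : x ∈ Set.Icc (0:ℝ) 1) (hy : y ∈ Set.Icc (0:ℝ) 1) :
    |deriv (cc.wordMap σ) x| ≤ cc.xi * |deriv (cc.wordMap σ) y| := by
  refine (cc.word_ratio σ x hx y hy).trans (mul_le_mul_of_nonneg_right ?_ (abs_nonneg _))
  rw [xi, Real.exp_le_exp]
  set t := cc.b ^ (-cc.γ) with ht
  have ht0 := cc.t_pos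
  have ht1 := cc.t_lt_one
  have hu := cc.bγ_gt_one
  have htu : t = (cc.b ^ cc.γ)⁻¹ := by rw [ht, ← Real.rpow_neg cc.hb0.le]
  have hsum : ∑ k ∈ Finset.range σ.length, t ^ (k+1) ≤ 1 / (cc.b ^ cc.γ - 1) := by
    have hne : t ≠ 1 := ne_of_lt ht1
    have h1 : ∑ k ∈ Finset.range σ.length, t ^ (k+1)
        = t * ∑ k ∈ Finset.range σ.length, t ^ k := by
      rw [Finset.mul_sum]
      exact Finset.sum_congr rfl fun k _ => by ring
    rw [h1, geom_sum_eq hne]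
    have heq : (t ^ σ.length - 1) / (t - 1) = (1 - t ^ σ.length) / (1 - t) := by
      rw [← neg_div_neg_eq]; ring_nf
    have h2 : (t ^ σ.length - 1) / (t - 1) ≤ 1 / (1 - t) := by
      rw [heq]
      have hpos : 0 < t ^ σ.length := pow_pos ht0 _
      have h1t : 0 < 1 - t := by linarith
      rw [div_le_div_iff₀ h1t h1t]
      nlinarith
    have h3 : t * ((t ^ σ.length - 1) / (t - 1)) ≤ t / (1 - t) := by
      rw [div_eq_mul_one_div t (1-t)]
      exact mul_le_mul_of_nonneg_left h2 ht0.le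
    refine h3.trans ?_
    have hu0 : (0:ℝ) < cc.b ^ cc.γ := lt_trans one_pos hu
    have hune : cc.b ^ cc.γ ≠ 0 := hu0.ne'
    have h1t : 0 < 1 - t := by linarith
    have hden : 0 < cc.b ^ cc.γ - 1 := by linarith
    have heq2 : t / (1 - t) = 1 / (cc.b ^ cc.γ - 1) := by
      rw [div_eq_div_iff h1t.ne' hden.ne', htu]
      field_simp
    exact le_of_eq heq2
  calc cc.c / cc.b * ∑ k ∈ Finset.range σ.length, t ^ (k+1)
      ≤ cc.c * (1 / (cc.b ^ cc.γ - 1)) := by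
        have h4 : cc.c / cc.b ≤ cc.c := div_le_self cc.hc.le cc.hb1.le
        have h5 : 0 ≤ ∑ k ∈ Finset.range σ.length, t ^ (k+1) :=
          Finset.sum_nonneg fun k _ => (pow_pos ht0 _).le
        have h6 : (0:ℝ) ≤ 1 / (cc.b ^ cc.γ - 1) := by
          have := cc.bγ_gt_one
          exact div_nonneg zero_le_one (by linarith)
        exact mul_le_mul h4 hsum h5 cc.hc.le
    _ = cc.c / (cc.b ^ cc.γ - 1) := by ring
lemma φnorm_bddAbove (σ : List (Fin cc.N)) :
    BddAbove ((fun x => |deriv (cc.wordMap σ) x|) '' Set.Icc 0 1) := by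
  refine ⟨cc.b⁻¹ ^ σ.length, ?_⟩
  rintro v ⟨x, hx, rfl⟩
  exact (cc.word_base σ x hx).2.2.2

lemma le_φnorm (σ : List (Fin cc.N)) {x : ℝ} (hx : x ∈ Set.Icc (0:ℝ) 1) :
    |deriv (cc.wordMap σ) x| ≤ cc.φnorm σ :=
  le_csSup (cc.φnorm_bddAbove σ) ⟨x, hx, rfl⟩

lemma φnorm_le (σ : List (Fin cc.N)) {M : ℝ}
    (hM : ∀ x ∈ Set.Icc (0:ℝ) 1, |deriv (cc.wordMap σ) x| ≤ M) : cc.φnorm σ ≤ M := by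
  refine csSup_le ⟨|deriv (cc.wordMap σ) 0|, 0, Set.left_mem_Icc.2 zero_le_one, rfl⟩ ?_
  rintro v ⟨x, hx, rfl⟩
  exact hM x hx

lemma φnorm_pos (σ : List (Fin cc.N)) : 0 < cc.φnorm σ :=
  lt_of_lt_of_le (cc.word_deriv_pos σ (Set.left_mem_Icc.2 zero_le_one))
    (cc.le_φnorm σ (Set.left_mem_Icc.2 zero_le_one))

lemma φnorm_le_xi_deriv (σ : List (Fin cc.N)) {x : ℝ} (hx : x ∈ Set.Icc (0:ℝ) 1) :
    cc.φnorm σ ≤ cc.xi * |deriv (cc.wordMap σ) x| :=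
  cc.φnorm_le σ fun y hy => cc.word_distortion σ hy hx

lemma wordMap_append (σ τ : List (Fin cc.N)) :
    cc.wordMap (σ ++ τ) = cc.wordMap σ ∘ cc.wordMap τ := by
  induction σ with
  | nil => rfl
  | cons j σ ih => simp [wordMap, ih, Function.comp_assoc]

lemma word_append_deriv (σ τ : List (Fin cc.N)) {x : ℝ} (hx : x ∈ Set.Icc (0:ℝ) 1) :
    deriv (cc.wordMap (σ ++ τ)) x
      = deriv (cc.wordMap σ) (cc.wordMap τ x) * deriv (cc.wordMap τ) x := by
  rw [cc.wordMap_append]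
  exact ((cc.word_hasDerivAt σ (cc.word_mem τ hx)).comp x (cc.word_hasDerivAt τ hx)).deriv

lemma φnorm_append_le (σ τ : List (Fin cc.N)) :
    cc.φnorm (σ ++ τ) ≤ cc.φnorm σ * cc.φnorm τ := by
  refine cc.φnorm_le _ fun x hx => ?_
  rw [cc.word_append_deriv σ τ hx, abs_mul]
  exact mul_le_mul (cc.le_φnorm σ (cc.word_mem τ hx)) (cc.le_φnorm τ hx)
    (abs_nonneg _) (cc.φnorm_pos σ).le

lemma φnorm_append_ge (σ τ : List (Fin cc.N)) :
    cc.φnorm σ * cc.φnorm τ ≤ cc.xi * cc.φnorm (σ ++ τ) := by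
  have hσ := cc.φnorm_pos σ
  have hξ := cc.xi_pos
  have hτle : cc.φnorm τ ≤ cc.xi * cc.φnorm (σ ++ τ) / cc.φnorm σ := by
    refine cc.φnorm_le τ fun x hx => ?_
    rw [le_div_iff₀ hσ]
    calc |deriv (cc.wordMap τ) x| * cc.φnorm σ
        ≤ |deriv (cc.wordMap τ) x| * (cc.xi * |deriv (cc.wordMap σ) (cc.wordMap τ x)|) :=
          mul_le_mul_of_nonneg_left (cc.φnorm_le_xi_deriv σ (cc.word_mem τ hx)) (abs_nonneg _)
      _ = cc.xi * |deriv (cc.wordMap (σ ++ τ)) x| := by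
          rw [cc.word_append_deriv σ τ hx, abs_mul]; ring
      _ ≤ cc.xi * cc.φnorm (σ ++ τ) :=
          mul_le_mul_of_nonneg_left (cc.le_φnorm _ hx) hξ.le
  calc cc.φnorm σ * cc.φnorm τ ≤ cc.φnorm σ * (cc.xi * cc.φnorm (σ ++ τ) / cc.φnorm σ) :=
        mul_le_mul_of_nonneg_left hτle hσ.le
    _ = cc.xi * cc.φnorm (σ ++ τ) := by field_simp

lemma diamJ_le (σ : List (Fin cc.N)) : cc.diamJ σ ≤ cc.φnorm σ := by
  refine Metric.diam_le_of_forall_dist_le (cc.φnorm_pos σ).le ?_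
  rintro u ⟨x, hx, rfl⟩ v ⟨y, hy, rfl⟩
  rw [Real.dist_eq]
  have h1 : |x - y| ≤ 1 := by
    rw [abs_sub_le_iff]; constructor <;> linarith [hx.1, hx.2, hy.1, hy.2]
  calc |cc.wordMap σ x - cc.wordMap σ y| ≤ cc.φnorm σ * |x - y| :=
        cc.word_lip σ (fun z hz => cc.le_φnorm σ hz) hx hy
    _ ≤ cc.φnorm σ * 1 := mul_le_mul_of_nonneg_left h1 (cc.φnorm_pos σ).le
    _ = cc.φnorm σ := mul_one _

lemma diamJ_ge (σ : List (Fin cc.N)) : cc.xi⁻¹ * cc.φnorm σ ≤ cc.diamJ σ := by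
  have h01 : (0:ℝ) < 1 := zero_lt_one
  have hcont : ContinuousOn (cc.wordMap σ) (Set.Icc 0 1) := fun x hx =>
    ((cc.word_hasDerivAt σ hx).differentiableAt.continuousAt).continuousWithinAt
  obtain ⟨z, hz, hslope⟩ := exists_hasDerivAt_eq_slope (cc.wordMap σ) (deriv (cc.wordMap σ))
    h01 hcont (fun x hx => cc.word_hasDerivAt σ (Set.mem_Icc_of_Ioo hx))
  have hz1 : z ∈ Set.Icc (0:ℝ) 1 := Set.mem_Icc_of_Ioo hz
  have hbdd : Bornology.IsBounded (cc.Jc σ) := by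
    refine (Metric.isBounded_Icc (0:ℝ) 1).subset ?_
    rintro u ⟨x, hx, rfl⟩
    exact cc.word_mem σ hx
  have hmem0 : cc.wordMap σ 0 ∈ cc.Jc σ := ⟨0, Set.left_mem_Icc.2 zero_le_one, rfl⟩
  have hmem1 : cc.wordMap σ 1 ∈ cc.Jc σ := ⟨1, Set.right_mem_Icc.2 zero_le_one, rfl⟩
  have hd : |deriv (cc.wordMap σ) z| ≤ cc.diamJ σ := by
    rw [hslope]
    have := Metric.dist_le_diam_of_mem hbdd hmem1 hmem0
    rw [Real.dist_eq] at this
    simpa [abs_div, diamJ] using this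
  rw [inv_mul_le_iff₀ cc.xi_pos]
  exact (cc.φnorm_le_xi_deriv σ hz1).trans (mul_le_mul_of_nonneg_left hd cc.xi_pos.le)
lemma eta_pos (h : ℝ) : 0 < cc.eta h := Real.rpow_pos_of_pos cc.xi_pos _

lemma one_le_eta {h : ℝ} (hh0 : 0 < h) : 1 ≤ cc.eta h :=
  Real.one_le_rpow cc.one_le_xi (by positivity)

lemma diamJ_pos (σ : List (Fin cc.N)) : 0 < cc.diamJ σ :=
  lt_of_lt_of_le (mul_pos (inv_pos.2 cc.xi_pos) (cc.φnorm_pos σ)) (cc.diamJ_ge σ)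

lemma φnorm_le_xi_diam (σ : List (Fin cc.N)) : cc.φnorm σ ≤ cc.xi * cc.diamJ σ := by
  have := cc.diamJ_ge σ
  rw [inv_mul_le_iff₀ cc.xi_pos] at this
  exact this

lemma mu_pos {μ : Measure ℝ} {h : ℝ} (hμ : cc.IsGibbsLike μ h)
    {σ : List (Fin cc.N)} (hσ : σ ≠ []) : 0 < (μ (cc.Jc σ)).toReal :=
  lt_of_lt_of_le (by have := cc.diamJ_pos σ; have := cc.eta_pos h; positivity)
    ((hμ.2.2 σ hσ).1)

lemma comparison {μ : Measure ℝ} {h : ℝ} (hμ : cc.IsGibbsLike μ h) (hh0 : 0 < h)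
    {r : ℝ} (hr : 0 < r) {σ τ : List (Fin cc.N)} (hσ : σ ≠ []) (hτ : τ ≠ []) :
    (μ (cc.Jc (σ ++ τ))).toReal * cc.φnorm (σ ++ τ) ^ r ≤
      (cc.Lconst h * cc.xi ^ r) *
        (((μ (cc.Jc σ)).toReal * cc.φnorm σ ^ r) * ((μ (cc.Jc τ)).toReal * cc.φnorm τ ^ r)) ∧
    ((μ (cc.Jc σ)).toReal * cc.φnorm σ ^ r) * ((μ (cc.Jc τ)).toReal * cc.φnorm τ ^ r) ≤
      (cc.Lconst h * cc.xi ^ r) *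
        ((μ (cc.Jc (σ ++ τ))).toReal * cc.φnorm (σ ++ τ) ^ r) := by
  have hστ : σ ++ τ ≠ [] := fun hcon => hσ (List.append_eq_nil_iff.1 hcon).1
  set e := cc.eta h with he
  set X := cc.xi with hX
  have he0 : 0 < e := cc.eta_pos h
  have he1 : 1 ≤ e := cc.one_le_eta hh0
  have hX0 : 0 < X := cc.xi_pos
  have hX1 : 1 ≤ X := cc.one_le_xi
  obtain ⟨G1σ, G2σ⟩ := hμ.2.2 σ hσ
  obtain ⟨G1τ, G2τ⟩ := hμ.2.2 τ hτ
  obtain ⟨G1στ, G2στ⟩ := hμ.2.2 (σ ++ τ) hστ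
  have hdσ := cc.diamJ_pos σ
  have hdτ := cc.diamJ_pos τ
  have hdστ := cc.diamJ_pos (σ ++ τ)
  have hpσ := cc.φnorm_pos σ
  have hpτ := cc.φnorm_pos τ
  have hpστ := cc.φnorm_pos (σ ++ τ)
  have hmσ := cc.mu_pos hμ hσ
  have hmτ := cc.mu_pos hμ hτ
  have hmστ := cc.mu_pos hμ hστ
  -- dσ^h ≤ e * mσ etc.
  have hdm : ∀ (ρ : List (Fin cc.N)), ρ ≠ [] →
      cc.diamJ ρ ^ h ≤ e * (μ (cc.Jc ρ)).toReal := by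
    intro ρ hρ
    have := (hμ.2.2 ρ hρ).1
    calc cc.diamJ ρ ^ h = e * (e⁻¹ * cc.diamJ ρ ^ h) := by field_simp
      _ ≤ e * (μ (cc.Jc ρ)).toReal := mul_le_mul_of_nonneg_left this he0.le
  -- pρ^t ≤ X^t * dρ^t
  have hpd : ∀ (ρ : List (Fin cc.N)) (t : ℝ), 0 < t →
      cc.φnorm ρ ^ t ≤ X ^ t * cc.diamJ ρ ^ t := by
    intro ρ t ht
    rw [← Real.mul_rpow hX0.le (cc.diamJ_pos ρ).le]
    exact Real.rpow_le_rpow (cc.φnorm_pos ρ).le (cc.φnorm_le_xi_diam ρ) ht.le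
  have hXpow : X ^ h * X ^ h ≤ X ^ ((3:ℝ)*h) * X ^ r := by
    rw [← Real.rpow_add hX0, ← Real.rpow_add hX0]
    exact Real.rpow_le_rpow_of_exponent_le hX1 (by linarith)
  have hXpow' : X ^ h * X ^ h * X ^ r ≤ X ^ ((3:ℝ)*h) * X ^ r := by
    rw [← Real.rpow_add hX0, ← Real.rpow_add hX0, ← Real.rpow_add hX0]
    exact Real.rpow_le_rpow_of_exponent_le hX1 (by linarith)
  constructor
  · -- upper bound
    have h1 : (μ (cc.Jc (σ ++ τ))).toReal ≤ e * cc.φnorm (σ ++ τ) ^ h :=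
      G2στ.trans (mul_le_mul_of_nonneg_left
        (Real.rpow_le_rpow hdστ.le (cc.diamJ_le _) hh0.le) he0.le)
    have h2 : cc.φnorm (σ ++ τ) ^ h ≤ cc.φnorm σ ^ h * cc.φnorm τ ^ h := by
      rw [← Real.mul_rpow hpσ.le hpτ.le]
      exact Real.rpow_le_rpow hpστ.le (cc.φnorm_append_le σ τ) hh0.le
    have h3 : cc.φnorm σ ^ h * cc.φnorm τ ^ h
        ≤ (X ^ h * (e * (μ (cc.Jc σ)).toReal)) * (X ^ h * (e * (μ (cc.Jc τ)).toReal)) := by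
      have hXh : (0:ℝ) < X ^ h := Real.rpow_pos_of_pos hX0 _
      refine mul_le_mul ?_ ?_ (Real.rpow_pos_of_pos hpτ _).le (by positivity)
      · exact (hpd σ h hh0).trans (mul_le_mul_of_nonneg_left (hdm σ hσ) hXh.le)
      · exact (hpd τ h hh0).trans (mul_le_mul_of_nonneg_left (hdm τ hτ) hXh.le)
    have h4 : cc.φnorm (σ ++ τ) ^ r ≤ cc.φnorm σ ^ r * cc.φnorm τ ^ r := by
      rw [← Real.mul_rpow hpσ.le hpτ.le]
      exact Real.rpow_le_rpow hpστ.le (cc.φnorm_append_le σ τ) hr.le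
    have hXh : (0:ℝ) < X ^ h := Real.rpow_pos_of_pos hX0 _
    have hpσr : (0:ℝ) < cc.φnorm σ ^ r := Real.rpow_pos_of_pos hpσ _
    have hpτr : (0:ℝ) < cc.φnorm τ ^ r := Real.rpow_pos_of_pos hpτ _
    have hXr : (0:ℝ) < X ^ r := Real.rpow_pos_of_pos hX0 _
    calc (μ (cc.Jc (σ ++ τ))).toReal * cc.φnorm (σ ++ τ) ^ r
        ≤ (e * ((X ^ h * (e * (μ (cc.Jc σ)).toReal)) * (X ^ h * (e * (μ (cc.Jc τ)).toReal))))
            * (cc.φnorm σ ^ r * cc.φnorm τ ^ r) := by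
          refine mul_le_mul ?_ h4 (Real.rpow_pos_of_pos hpστ _).le (by positivity)
          exact h1.trans (mul_le_mul_of_nonneg_left (h2.trans h3) he0.le)
      _ = (e^3 * (X ^ h * X ^ h)) *
            (((μ (cc.Jc σ)).toReal * cc.φnorm σ ^ r) * ((μ (cc.Jc τ)).toReal * cc.φnorm τ ^ r)) := by
          ring
      _ ≤ (e^3 * (X ^ ((3:ℝ)*h) * X ^ r)) *
            (((μ (cc.Jc σ)).toReal * cc.φnorm σ ^ r) * ((μ (cc.Jc τ)).toReal * cc.φnorm τ ^ r)) := by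
          refine mul_le_mul_of_nonneg_right (mul_le_mul_of_nonneg_left hXpow (by positivity)) ?_
          positivity
      _ = (cc.Lconst h * X ^ r) *
            (((μ (cc.Jc σ)).toReal * cc.φnorm σ ^ r) * ((μ (cc.Jc τ)).toReal * cc.φnorm τ ^ r)) := by
          simp only [Lconst, he, hX]; ring
  · -- lower bound
    have h1 : (μ (cc.Jc σ)).toReal * (μ (cc.Jc τ)).toReal
        ≤ e * e * (cc.φnorm σ ^ h * cc.φnorm τ ^ h) := by
      calc (μ (cc.Jc σ)).toReal * (μ (cc.Jc τ)).toReal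
          ≤ (e * cc.diamJ σ ^ h) * (e * cc.diamJ τ ^ h) :=
            mul_le_mul G2σ G2τ hmτ.le (by positivity)
        _ = e * e * (cc.diamJ σ ^ h * cc.diamJ τ ^ h) := by ring
        _ ≤ e * e * (cc.φnorm σ ^ h * cc.φnorm τ ^ h) := by
            refine mul_le_mul_of_nonneg_left ?_ (by positivity)
            exact mul_le_mul (Real.rpow_le_rpow hdσ.le (cc.diamJ_le σ) hh0.le)
              (Real.rpow_le_rpow hdτ.le (cc.diamJ_le τ) hh0.le)
              (by positivity) (by positivity)
    have h2 : ∀ t : ℝ, 0 < t → cc.φnorm σ ^ t * cc.φnorm τ ^ t ≤ X ^ t * cc.φnorm (σ ++ τ) ^ t := by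
      intro t ht
      rw [← Real.mul_rpow hpσ.le hpτ.le, ← Real.mul_rpow hX0.le hpστ.le]
      exact Real.rpow_le_rpow (by positivity) (cc.φnorm_append_ge σ τ) ht.le
    have h3 : cc.φnorm (σ ++ τ) ^ h ≤ X ^ h * (e * (μ (cc.Jc (σ ++ τ))).toReal) :=
      (hpd _ h hh0).trans (by
        refine mul_le_mul_of_nonneg_left ?_ (Real.rpow_pos_of_pos hX0 _).le
        exact (Real.rpow_le_rpow hdστ.le (le_refl _) hh0.le).trans_eq rfl |>.trans (hdm _ hστ))
    calc ((μ (cc.Jc σ)).toReal * cc.φnorm σ ^ r) * ((μ (cc.Jc τ)).toReal * cc.φnorm τ ^ r)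
        = ((μ (cc.Jc σ)).toReal * (μ (cc.Jc τ)).toReal) * (cc.φnorm σ ^ r * cc.φnorm τ ^ r) := by
          ring
      _ ≤ (e * e * (cc.φnorm σ ^ h * cc.φnorm τ ^ h)) * (X ^ r * cc.φnorm (σ ++ τ) ^ r) := by
          refine mul_le_mul h1 (h2 r hr) (by positivity) (by positivity)
      _ ≤ (e * e * (X ^ h * cc.φnorm (σ ++ τ) ^ h)) * (X ^ r * cc.φnorm (σ ++ τ) ^ r) := by
          refine mul_le_mul_of_nonneg_right (mul_le_mul_of_nonneg_left (h2 h hh0) (by positivity)) ?_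
          positivity
      _ ≤ (e * e * (X ^ h * (X ^ h * (e * (μ (cc.Jc (σ ++ τ))).toReal)))) *
            (X ^ r * cc.φnorm (σ ++ τ) ^ r) := by
          refine mul_le_mul_of_nonneg_right (mul_le_mul_of_nonneg_left
            (mul_le_mul_of_nonneg_left h3 (Real.rpow_pos_of_pos hX0 _).le) (by positivity)) ?_
          positivity
      _ = (e^3 * (X ^ h * X ^ h * X ^ r)) *
            ((μ (cc.Jc (σ ++ τ))).toReal * cc.φnorm (σ ++ τ) ^ r) := by ring
      _ ≤ (e^3 * (X ^ ((3:ℝ)*h) * X ^ r)) *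
            ((μ (cc.Jc (σ ++ τ))).toReal * cc.φnorm (σ ++ τ) ^ r) := by
          refine mul_le_mul_of_nonneg_right (mul_le_mul_of_nonneg_left ?_ (by positivity)) ?_
          · exact hXpow'
          · positivity
      _ = (cc.Lconst h * X ^ r) *
            ((μ (cc.Jc (σ ++ τ))).toReal * cc.φnorm (σ ++ τ) ^ r) := by simp only [Lconst, he, hX]; ring
/-- auxiliary term -/
def aterm (μ : Measure ℝ) (r : ℝ) (σ : List (Fin cc.N)) : ℝ :=
  (μ (cc.Jc σ)).toReal * cc.φnorm σ ^ r

/-- auxiliary sum -/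
def Ssum (μ : Measure ℝ) (r s : ℝ) (n : ℕ) : ℝ :=
  ∑ σ : Fin n → Fin cc.N, (cc.aterm μ r (List.ofFn σ)) ^ s

lemma aterm_pos {μ : Measure ℝ} {h : ℝ} (hμ : cc.IsGibbsLike μ h)
    {σ : List (Fin cc.N)} (hσ : σ ≠ []) (r : ℝ) : 0 < cc.aterm μ r σ :=
  mul_pos (cc.mu_pos hμ hσ) (Real.rpow_pos_of_pos (cc.φnorm_pos σ) _)

lemma finNonempty : Nonempty (Fin cc.N) := ⟨⟨0, by have := cc.hN; omega⟩⟩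

lemma ofFn_ne_nil {n : ℕ} (hn : 1 ≤ n) (σ : Fin n → Fin cc.N) : List.ofFn σ ≠ [] := by
  simp only [ne_eq, List.ofFn_eq_nil_iff]
  omega

lemma Ssum_pos {μ : Measure ℝ} {h : ℝ} (hμ : cc.IsGibbsLike μ h) (r s : ℝ)
    {n : ℕ} (hn : 1 ≤ n) : 0 < cc.Ssum μ r s n := by
  haveI := cc.finNonempty
  refine Finset.sum_pos (fun σ _ => ?_) Finset.univ_nonempty
  exact Real.rpow_pos_of_pos (cc.aterm_pos hμ (cc.ofFn_ne_nil hn σ) r) _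

lemma Ssum_split (μ : Measure ℝ) (r s : ℝ) (m n : ℕ) :
    cc.Ssum μ r s (m + n) = ∑ α : Fin m → Fin cc.N, ∑ β : Fin n → Fin cc.N,
      (cc.aterm μ r (List.ofFn α ++ List.ofFn β)) ^ s := by
  rw [Ssum, ← Equiv.sum_comp (Fin.appendEquiv m n)
    (fun σ : Fin (m+n) → Fin cc.N => (cc.aterm μ r (List.ofFn σ)) ^ s), Fintype.sum_prod_type]
  refine Finset.sum_congr rfl fun α _ => Finset.sum_congr rfl fun β _ => ?_
  simp [Fin.appendEquiv, List.ofFn_fin_append]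

lemma Ssum_submul {μ : Measure ℝ} {h : ℝ} (hμ : cc.IsGibbsLike μ h) (hh0 : 0 < h)
    {r : ℝ} (hr : 0 < r) {s : ℝ} (hs0 : 0 < s) {m n : ℕ} (hm : 1 ≤ m) (hn : 1 ≤ n) :
    cc.Ssum μ r s (m + n) ≤ (cc.Lconst h * cc.xi ^ r) ^ s * (cc.Ssum μ r s m * cc.Ssum μ r s n) ∧
    cc.Ssum μ r s m * cc.Ssum μ r s n ≤ (cc.Lconst h * cc.xi ^ r) ^ s * cc.Ssum μ r s (m + n) := by
  have hC0 : 0 < cc.Lconst h * cc.xi ^ r := by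
    have := cc.eta_pos h
    have := cc.xi_pos
    have : 0 < cc.Lconst h := by rw [Lconst]; positivity
    positivity
  have hterm : ∀ (α : Fin m → Fin cc.N) (β : Fin n → Fin cc.N),
      (cc.aterm μ r (List.ofFn α ++ List.ofFn β)) ^ s ≤
        (cc.Lconst h * cc.xi ^ r) ^ s *
          ((cc.aterm μ r (List.ofFn α)) ^ s * (cc.aterm μ r (List.ofFn β)) ^ s) ∧
      (cc.aterm μ r (List.ofFn α)) ^ s * (cc.aterm μ r (List.ofFn β)) ^ s ≤
        (cc.Lconst h * cc.xi ^ r) ^ s * (cc.aterm μ r (List.ofFn α ++ List.ofFn β)) ^ s := by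
    intro α β
    have hα := cc.ofFn_ne_nil hm α
    have hβ := cc.ofFn_ne_nil hn β
    have haα := cc.aterm_pos hμ hα r
    have haβ := cc.aterm_pos hμ hβ r
    have haαβ : 0 < cc.aterm μ r (List.ofFn α ++ List.ofFn β) :=
      cc.aterm_pos hμ (fun hcon => hα (List.append_eq_nil_iff.1 hcon).1) r
    obtain ⟨hcomp1, hcomp2⟩ := cc.comparison hμ hh0 hr hα hβ
    constructor
    · calc (cc.aterm μ r (List.ofFn α ++ List.ofFn β)) ^ s
          ≤ ((cc.Lconst h * cc.xi ^ r) * (cc.aterm μ r (List.ofFn α) * cc.aterm μ r (List.ofFn β))) ^ s :=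
            Real.rpow_le_rpow haαβ.le hcomp1 hs0.le
        _ = (cc.Lconst h * cc.xi ^ r) ^ s *
              ((cc.aterm μ r (List.ofFn α)) ^ s * (cc.aterm μ r (List.ofFn β)) ^ s) := by
            rw [Real.mul_rpow hC0.le (by positivity), Real.mul_rpow haα.le haβ.le]
    · calc (cc.aterm μ r (List.ofFn α)) ^ s * (cc.aterm μ r (List.ofFn β)) ^ s
          = (cc.aterm μ r (List.ofFn α) * cc.aterm μ r (List.ofFn β)) ^ s := by
            rw [Real.mul_rpow haα.le haβ.le]
        _ ≤ ((cc.Lconst h * cc.xi ^ r) * cc.aterm μ r (List.ofFn α ++ List.ofFn β)) ^ s :=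
            Real.rpow_le_rpow (by positivity) hcomp2 hs0.le
        _ = (cc.Lconst h * cc.xi ^ r) ^ s * (cc.aterm μ r (List.ofFn α ++ List.ofFn β)) ^ s := by
            rw [Real.mul_rpow hC0.le haαβ.le]
  have hrw : (cc.Lconst h * cc.xi ^ r) ^ s * (cc.Ssum μ r s m * cc.Ssum μ r s n)
      = ∑ α : Fin m → Fin cc.N, ∑ β : Fin n → Fin cc.N,
          (cc.Lconst h * cc.xi ^ r) ^ s *
            ((cc.aterm μ r (List.ofFn α)) ^ s * (cc.aterm μ r (List.ofFn β)) ^ s) := by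
    rw [Ssum, Ssum, Finset.sum_mul_sum, Finset.mul_sum]
    refine Finset.sum_congr rfl fun α _ => ?_
    rw [Finset.mul_sum]
  constructor
  · rw [cc.Ssum_split μ r s m n, hrw]
    exact Finset.sum_le_sum fun α _ => Finset.sum_le_sum fun β _ => (hterm α β).1
  · calc cc.Ssum μ r s m * cc.Ssum μ r s n
        = ∑ α : Fin m → Fin cc.N, ∑ β : Fin n → Fin cc.N,
            (cc.aterm μ r (List.ofFn α)) ^ s * (cc.aterm μ r (List.ofFn β)) ^ s := by
          rw [Ssum, Ssum, Finset.sum_mul_sum]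
      _ ≤ ∑ α : Fin m → Fin cc.N, ∑ β : Fin n → Fin cc.N,
            (cc.Lconst h * cc.xi ^ r) ^ s * (cc.aterm μ r (List.ofFn α ++ List.ofFn β)) ^ s :=
          Finset.sum_le_sum fun α _ => Finset.sum_le_sum fun β _ => (hterm α β).2
      _ = (cc.Lconst h * cc.xi ^ r) ^ s * cc.Ssum μ r s (m + n) := by
          rw [cc.Ssum_split μ r s m n, Finset.mul_sum]
          refine Finset.sum_congr rfl fun α _ => ?_
          rw [Finset.mul_sum]
lemma Ssum_pow {μ : Measure ℝ} {h : ℝ} (hμ : cc.IsGibbsLike μ h) (hh0 : 0 < h)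
    {r : ℝ} (hr : 0 < r) {s : ℝ} (hs0 : 0 < s) {n : ℕ} (hn : 1 ≤ n) :
    ∀ k : ℕ, 1 ≤ k →
      cc.Ssum μ r s (k * n) ≤
        ((cc.Lconst h * cc.xi ^ r) ^ s) ^ (k-1) * (cc.Ssum μ r s n) ^ k ∧
      (cc.Ssum μ r s n) ^ k ≤
        ((cc.Lconst h * cc.xi ^ r) ^ s) ^ (k-1) * cc.Ssum μ r s (k * n) := by
  have hC0 : 0 < cc.Lconst h * cc.xi ^ r := by
    have := cc.eta_pos h
    have := cc.xi_pos
    have : 0 < cc.Lconst h := by rw [Lconst]; positivity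
    positivity
  have hD0 : 0 < (cc.Lconst h * cc.xi ^ r) ^ s := Real.rpow_pos_of_pos hC0 _
  intro k hk
  induction k, hk using Nat.le_induction with
  | base => simp [one_mul]
  | succ k hk ih =>
    obtain ⟨ih1, ih2⟩ := ih
    have hkn : 1 ≤ k * n := Nat.one_le_iff_ne_zero.2 (Nat.mul_ne_zero (by omega) (by omega))
    obtain ⟨hsub1, hsub2⟩ := cc.Ssum_submul hμ hh0 hr hs0 hkn hn
    have hSkn := cc.Ssum_pos hμ r s hkn
    have hSn := cc.Ssum_pos hμ r s hn
    have hmul : (k + 1) * n = k * n + n := by ring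
    have hk1 : k + 1 - 1 = (k - 1) + 1 := by omega
    constructor
    · rw [hmul, hk1]
      calc cc.Ssum μ r s (k * n + n)
          ≤ (cc.Lconst h * cc.xi ^ r) ^ s * (cc.Ssum μ r s (k * n) * cc.Ssum μ r s n) := hsub1
        _ ≤ (cc.Lconst h * cc.xi ^ r) ^ s *
              ((((cc.Lconst h * cc.xi ^ r) ^ s) ^ (k-1) * (cc.Ssum μ r s n) ^ k) *
                cc.Ssum μ r s n) := by
            refine mul_le_mul_of_nonneg_left (mul_le_mul_of_nonneg_right ih1 hSn.le) hD0.le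
        _ = (((cc.Lconst h * cc.xi ^ r) ^ s) ^ ((k-1)+1)) * (cc.Ssum μ r s n) ^ (k+1) := by
            rw [pow_succ, pow_succ]; ring
    · rw [hmul, hk1]
      calc (cc.Ssum μ r s n) ^ (k+1) = (cc.Ssum μ r s n) ^ k * cc.Ssum μ r s n := pow_succ _ _
        _ ≤ (((cc.Lconst h * cc.xi ^ r) ^ s) ^ (k-1) * cc.Ssum μ r s (k * n)) *
              cc.Ssum μ r s n := mul_le_mul_of_nonneg_right ih2 hSn.le
        _ = ((cc.Lconst h * cc.xi ^ r) ^ s) ^ (k-1) * (cc.Ssum μ r s (k*n) * cc.Ssum μ r s n) := by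
            ring
        _ ≤ ((cc.Lconst h * cc.xi ^ r) ^ s) ^ (k-1) *
              ((cc.Lconst h * cc.xi ^ r) ^ s * cc.Ssum μ r s (k*n + n)) :=
            mul_le_mul_of_nonneg_left hsub2 (pow_nonneg hD0.le _)
        _ = (((cc.Lconst h * cc.xi ^ r) ^ s) ^ ((k-1)+1)) * cc.Ssum μ r s (k*n + n) := by
            rw [pow_succ]; ring
end CookieCutter
/-- The `n`-th quantization error of order `r`. -/
def Vnr (μ : Measure ℝ) (n : ℕ) (r : ℝ) : ℝ :=
  sInf ((fun α : Finset ℝ => ∫ x, Metric.infDist x (α : Set ℝ) ^ r ∂μ) ''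
    {α : Finset ℝ | α.Nonempty ∧ α.card ≤ n})

/-- The auxiliary quantization error `u_{n,r}` with `U = (0,1)`. -/
def unr (μ : Measure ℝ) (n : ℕ) (r : ℝ) : ℝ :=
  sInf ((fun α : Finset ℝ =>
      ∫ x, Metric.infDist x ((α : Set ℝ) ∪ (Set.Ioo (0:ℝ) 1)ᶜ) ^ r ∂μ) ''
    {α : Finset ℝ | α.card ≤ n})


theorem sum_kappa_bounds (cc : CookieCutter) (Q : ℝ → ℝ)
    (hQ : ∀ t : ℝ, Filter.Tendsto
      (fun k : ℕ => (1 / (k : ℝ)) * Real.log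
        (∑ σ : Fin k → Fin cc.N, cc.φnorm (List.ofFn σ) ^ t))
      Filter.atTop (nhds (Q t)))
    (h : ℝ) (hh0 : 0 < h) (hQh : Q h = 0)
    (μ : MeasureTheory.Measure ℝ) (hμ : cc.IsGibbsLike μ h) (r : ℝ) (hr : 0 < r)
    (κ : ℝ) (hκ : 0 < κ)
    (hκlim : Filter.Tendsto
      (fun n : ℕ => (1 / (n : ℝ)) * Real.log
        (∑ σ : Fin n → Fin cc.N,
          ((μ (cc.Jc (List.ofFn σ))).toReal * cc.φnorm (List.ofFn σ) ^ r) ^ (κ / (r + κ))))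
      Filter.atTop (nhds 0)) :
    ∀ n : ℕ, 1 ≤ n →
      ((cc.Lconst h * cc.xi ^ r) ^ (κ / (r + κ)))⁻¹ ≤
        (∑ σ : Fin n → Fin cc.N,
          ((μ (cc.Jc (List.ofFn σ))).toReal * cc.φnorm (List.ofFn σ) ^ r) ^ (κ / (r + κ))) ∧
      (∑ σ : Fin n → Fin cc.N,
          ((μ (cc.Jc (List.ofFn σ))).toReal * cc.φnorm (List.ofFn σ) ^ r) ^ (κ / (r + κ))) ≤
        (cc.Lconst h * cc.xi ^ r) ^ (κ / (r + κ)) := by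

  intro n hn
  have hs0 : 0 < κ / (r + κ) := div_pos hκ (by linarith)
  have hC0 : 0 < cc.Lconst h * cc.xi ^ r := by
    have h1 := cc.eta_pos h
    have h2 := cc.xi_pos
    have h3 : 0 < cc.Lconst h := by rw [CookieCutter.Lconst]; positivity
    positivity
  set s := κ / (r + κ) with hs
  set D := (cc.Lconst h * cc.xi ^ r) ^ s with hD
  have hD0 : 0 < D := Real.rpow_pos_of_pos hC0 _
  have hfun : (fun m : ℕ => (1 / (m : ℝ)) * Real.log
        (∑ σ : Fin m → Fin cc.N,
          ((μ (cc.Jc (List.ofFn σ))).toReal * cc.φnorm (List.ofFn σ) ^ r) ^ s))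
      = fun m : ℕ => (1 / (m : ℝ)) * Real.log (cc.Ssum μ r s m) := rfl
  rw [hfun] at hκlim
  have hSn := cc.Ssum_pos hμ r s hn
  have hn0' : (0:ℝ) < (n:ℝ) := by exact_mod_cast Nat.lt_of_lt_of_le Nat.zero_lt_one hn
  have hg : Filter.Tendsto (fun k : ℕ => k * n) Filter.atTop Filter.atTop :=
    Filter.tendsto_atTop_mono (fun k => Nat.le_mul_of_pos_right k (by omega)) Filter.tendsto_id
  have htend : Filter.Tendsto
      (fun k : ℕ => (1 / ((k*n : ℕ) : ℝ)) * Real.log (cc.Ssum μ r s (k*n)))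
      Filter.atTop (nhds 0) := hκlim.comp hg
  have hlogs : ∀ k : ℕ, 1 ≤ k →
      Real.log (cc.Ssum μ r s (k*n))
        ≤ ((k:ℝ)-1) * Real.log D + (k:ℝ) * Real.log (cc.Ssum μ r s n) ∧
      (k:ℝ) * Real.log (cc.Ssum μ r s n) - ((k:ℝ)-1) * Real.log D
        ≤ Real.log (cc.Ssum μ r s (k*n)) := by
    intro k hk
    have hkn : 1 ≤ k * n := Nat.one_le_iff_ne_zero.2 (Nat.mul_ne_zero (by omega) (by omega))
    obtain ⟨h1, h2⟩ := cc.Ssum_pow hμ hh0 hr hs0 hn k hk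
    have hSkn := cc.Ssum_pos hμ r s hkn
    have hcast : ((k - 1 : ℕ) : ℝ) = (k:ℝ) - 1 := by
      rw [Nat.cast_sub hk]; norm_num
    constructor
    · have hlog := Real.log_le_log hSkn h1
      rw [Real.log_mul (pow_ne_zero _ hD0.ne') (pow_ne_zero _ hSn.ne'),
        Real.log_pow, Real.log_pow, hcast] at hlog
      exact hlog
    · have hlog := Real.log_le_log (pow_pos hSn k) h2
      rw [Real.log_mul (pow_ne_zero _ hD0.ne') hSkn.ne',
        Real.log_pow, Real.log_pow, hcast] at hlog
      linarith
  have hfrac : Filter.Tendsto (fun k : ℕ => ((k:ℝ)-1)/((k:ℝ)*(n:ℝ)))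
      Filter.atTop (nhds (1/(n:ℝ))) := by
    have h1 : Filter.Tendsto (fun k : ℕ => (1 - (k:ℝ)⁻¹) * (1/(n:ℝ)))
        Filter.atTop (nhds ((1 - 0) * (1/(n:ℝ)))) :=
      (tendsto_const_nhds.sub tendsto_inv_atTop_nhds_zero_nat).mul_const _
    have h2 : (fun k : ℕ => (1 - (k:ℝ)⁻¹) * (1/(n:ℝ)))
        =ᶠ[Filter.atTop] fun k : ℕ => ((k:ℝ)-1)/((k:ℝ)*(n:ℝ)) := by
      refine Filter.eventually_atTop.2 ⟨1, fun k hk => ?_⟩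
      have hk0 : ((k:ℝ)) ≠ 0 := by
        have : (0:ℝ) < (k:ℝ) := by exact_mod_cast Nat.lt_of_lt_of_le Nat.zero_lt_one hk
        exact this.ne'
      field_simp
    have := h1.congr' h2
    simpa using this
  -- upper estimate for the limit (gives lower bound for S n)
  have hub : (fun k : ℕ => (1 / ((k*n : ℕ) : ℝ)) * Real.log (cc.Ssum μ r s (k*n)))
      ≤ᶠ[Filter.atTop] fun k : ℕ =>
        ((k:ℝ)-1)/((k:ℝ)*(n:ℝ)) * Real.log D + (1/(n:ℝ)) * Real.log (cc.Ssum μ r s n) := by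
    refine Filter.eventually_atTop.2 ⟨1, fun k hk => ?_⟩
    have hk0 : (0:ℝ) < (k:ℝ) := by exact_mod_cast Nat.lt_of_lt_of_le Nat.zero_lt_one hk
    have hcastkn : ((k*n : ℕ) : ℝ) = (k:ℝ)*(n:ℝ) := by push_cast; ring
    have hnonneg : (0:ℝ) ≤ 1/((k:ℝ)*(n:ℝ)) := by positivity
    have hmain := (hlogs k hk).1
    have heq : (1:ℝ)/((k:ℝ)*(n:ℝ)) *
          (((k:ℝ)-1) * Real.log D + (k:ℝ) * Real.log (cc.Ssum μ r s n))
        = ((k:ℝ)-1)/((k:ℝ)*(n:ℝ)) * Real.log D + (1/(n:ℝ)) * Real.log (cc.Ssum μ r s n) := by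
      field_simp
    calc (1 / ((k*n : ℕ) : ℝ)) * Real.log (cc.Ssum μ r s (k*n))
        = (1/((k:ℝ)*(n:ℝ))) * Real.log (cc.Ssum μ r s (k*n)) := by rw [hcastkn]
      _ ≤ (1/((k:ℝ)*(n:ℝ))) *
            (((k:ℝ)-1) * Real.log D + (k:ℝ) * Real.log (cc.Ssum μ r s n)) :=
          mul_le_mul_of_nonneg_left hmain hnonneg
      _ = ((k:ℝ)-1)/((k:ℝ)*(n:ℝ)) * Real.log D + (1/(n:ℝ)) * Real.log (cc.Ssum μ r s n) := heq
  have hu : Filter.Tendsto (fun k : ℕ =>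
        ((k:ℝ)-1)/((k:ℝ)*(n:ℝ)) * Real.log D + (1/(n:ℝ)) * Real.log (cc.Ssum μ r s n))
      Filter.atTop (nhds ((1/(n:ℝ)) * Real.log D + (1/(n:ℝ)) * Real.log (cc.Ssum μ r s n))) :=
    (hfrac.mul_const _).add tendsto_const_nhds
  have h0le : (0:ℝ) ≤ (1/(n:ℝ)) * Real.log D + (1/(n:ℝ)) * Real.log (cc.Ssum μ r s n) :=
    le_of_tendsto_of_tendsto htend hu hub
  have hsum0 : 0 ≤ Real.log D + Real.log (cc.Ssum μ r s n) := by
    have hmul := mul_le_mul_of_nonneg_left h0le hn0'.le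
    rw [mul_zero] at hmul
    calc (0:ℝ) ≤ (n:ℝ) * ((1/(n:ℝ)) * Real.log D + (1/(n:ℝ)) * Real.log (cc.Ssum μ r s n)) :=
          hmul
      _ = Real.log D + Real.log (cc.Ssum μ r s n) := by field_simp
  -- lower estimate for the limit (gives upper bound for S n)
  have hlb : (fun k : ℕ =>
        (1/(n:ℝ)) * Real.log (cc.Ssum μ r s n) - ((k:ℝ)-1)/((k:ℝ)*(n:ℝ)) * Real.log D)
      ≤ᶠ[Filter.atTop] fun k : ℕ =>
        (1 / ((k*n : ℕ) : ℝ)) * Real.log (cc.Ssum μ r s (k*n)) := by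
    refine Filter.eventually_atTop.2 ⟨1, fun k hk => ?_⟩
    have hk0 : (0:ℝ) < (k:ℝ) := by exact_mod_cast Nat.lt_of_lt_of_le Nat.zero_lt_one hk
    have hcastkn : ((k*n : ℕ) : ℝ) = (k:ℝ)*(n:ℝ) := by push_cast; ring
    have hnonneg : (0:ℝ) ≤ 1/((k:ℝ)*(n:ℝ)) := by positivity
    have hmain := (hlogs k hk).2
    have heq : (1:ℝ)/((k:ℝ)*(n:ℝ)) *
          ((k:ℝ) * Real.log (cc.Ssum μ r s n) - ((k:ℝ)-1) * Real.log D)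
        = (1/(n:ℝ)) * Real.log (cc.Ssum μ r s n) - ((k:ℝ)-1)/((k:ℝ)*(n:ℝ)) * Real.log D := by
      field_simp
    calc (1/(n:ℝ)) * Real.log (cc.Ssum μ r s n) - ((k:ℝ)-1)/((k:ℝ)*(n:ℝ)) * Real.log D
        = (1/((k:ℝ)*(n:ℝ))) *
            ((k:ℝ) * Real.log (cc.Ssum μ r s n) - ((k:ℝ)-1) * Real.log D) := heq.symm
      _ ≤ (1/((k:ℝ)*(n:ℝ))) * Real.log (cc.Ssum μ r s (k*n)) :=
          mul_le_mul_of_nonneg_left hmain hnonneg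
      _ = (1 / ((k*n : ℕ) : ℝ)) * Real.log (cc.Ssum μ r s (k*n)) := by rw [hcastkn]
  have hv : Filter.Tendsto (fun k : ℕ =>
        (1/(n:ℝ)) * Real.log (cc.Ssum μ r s n) - ((k:ℝ)-1)/((k:ℝ)*(n:ℝ)) * Real.log D)
      Filter.atTop
      (nhds ((1/(n:ℝ)) * Real.log (cc.Ssum μ r s n) - (1/(n:ℝ)) * Real.log D)) :=
    tendsto_const_nhds.sub (hfrac.mul_const _)
  have hle0 : (1/(n:ℝ)) * Real.log (cc.Ssum μ r s n) - (1/(n:ℝ)) * Real.log D ≤ 0 :=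
    le_of_tendsto_of_tendsto hv htend hlb
  have hsum1 : Real.log (cc.Ssum μ r s n) ≤ Real.log D := by
    have hmul := mul_le_mul_of_nonneg_left hle0 hn0'.le
    rw [mul_zero] at hmul
    have : (n:ℝ) * ((1/(n:ℝ)) * Real.log (cc.Ssum μ r s n) - (1/(n:ℝ)) * Real.log D)
        = Real.log (cc.Ssum μ r s n) - Real.log D := by field_simp
    rw [this] at hmul
    linarith
  constructor
  · show D⁻¹ ≤ cc.Ssum μ r s n
    have hlog : Real.log D⁻¹ ≤ Real.log (cc.Ssum μ r s n) := by
      rw [Real.log_inv]; linarith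
    calc D⁻¹ = Real.exp (Real.log D⁻¹) := (Real.exp_log (by positivity)).symm
      _ ≤ Real.exp (Real.log (cc.Ssum μ r s n)) := Real.exp_le_exp.2 hlog
      _ = cc.Ssum μ r s n := Real.exp_log hSn
  · show cc.Ssum μ r s n ≤ D
    calc cc.Ssum μ r s n = Real.exp (Real.log (cc.Ssum μ r s n)) := (Real.exp_log hSn).symm
      _ ≤ Real.exp (Real.log D) := Real.exp_le_exp.2 hsum1
      _ = D := Real.exp_log hD0
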